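/- Let p, q ≥ 1, N = p + q, and let (t_i, a_i)_{i=1}^r be a good parameter satisfying the nonvanishing condition, such that every rational occurs at most twice in ν. Then: (a) if q_j = 0, the multisets ν_{≤j} = ν_{<j} ⊔ ν_j and ν_{>j} are multiplicity-free of cardinalities p and q respectively; (b) if q_j ≥ 1 and p_j equals the number of elements of ν_j lying in ν_{>j}, then the multisets ν_{<j} ⊔ (ν_j ∩ ν_{>j}) and ν_{≥j} ∖ (ν_j ∩ ν_{>j}) are multiplicity-free of cardinalities p and q respectively, where ν_{≥j} = ν_j ⊔ ν_{>j} and ν_j ∩ ν_{>j} denotes the set of common elements, one copy of each being removed in the difference; (c) if q_j ≥ 1 and q_j equals the number of elements of ν_j lying in ν_{<j}, then the multisets ν_{≤j} ∖ (ν_{<j} ∩ ν_j) and (ν_{<j} ∩ ν_j) ⊔ ν_{>j} are multiplicity-free of cardinalities p and q respectively. -/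

import Mathlib

open Finset

/-- The multiset `P(λ) = {λ_i − (N−1)/2 + (p−i) : 1 ≤ i ≤ p}` of rationals,
for `N = p + q` and a weight `λ : ℕ → ℤ` (1-based indexing). -/
def Pms (p q : ℕ) (lam : ℕ → ℤ) : Multiset ℚ :=
  (Finset.Icc 1 p).val.map
    (fun i => (lam i : ℚ) - ((p : ℚ) + (q : ℚ) - 1) / 2 + ((p : ℚ) - (i : ℚ)))

/-- The multiset `Q(λ) = {λ_{p+i} + (N−1)/2 − (i−1) : 1 ≤ i ≤ q}`. -/
def Qms (p q : ℕ) (lam : ℕ → ℤ) : Multiset ℚ :=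
  (Finset.Icc 1 q).val.map
    (fun i => (lam (p + i) : ℚ) + ((p : ℚ) + (q : ℚ) - 1) / 2 - ((i : ℚ) - 1))

/-- Dominance: `λ_1 ≥ … ≥ λ_p` and `λ_{p+1} ≥ … ≥ λ_{p+q}`. -/
def Dominant (p q : ℕ) (lam : ℕ → ℤ) : Prop :=
  (∀ i, 1 ≤ i → i < p → lam (i + 1) ≤ lam i) ∧
  (∀ i, p + 1 ≤ i → i < p + q → lam (i + 1) ≤ lam i)

/-- `p' = #{i : 1 ≤ i ≤ p, λ_i = λ_p}`. -/
def pPrime (p : ℕ) (lam : ℕ → ℤ) : ℕ :=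
  ((Finset.Icc 1 p).filter (fun i => lam i = lam p)).card

/-- `q' = #{i : p+1 ≤ i ≤ p+q, λ_i = λ_{p+1}}`. -/
def qPrime (p q : ℕ) (lam : ℕ → ℤ) : ℕ :=
  ((Finset.Icc (p + 1) (p + q)).filter (fun i => lam i = lam (p + 1))).card

/-- The segment `P' = {λ_p − (N−1)/2 + k : 0 ≤ k ≤ p'−1}`. -/
def Pseg (p q : ℕ) (lam : ℕ → ℤ) : Finset ℚ :=
  (Finset.range (pPrime p lam)).image
    (fun k : ℕ => (lam p : ℚ) - ((p : ℚ) + (q : ℚ) - 1) / 2 + (k : ℚ))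

/-- The segment `Q' = {λ_{p+1} + (N−1)/2 − k : 0 ≤ k ≤ q'−1}`. -/
def Qseg (p q : ℕ) (lam : ℕ → ℤ) : Finset ℚ :=
  (Finset.range (qPrime p q lam)).image
    (fun k : ℕ => (lam (p + 1) : ℚ) + ((p : ℚ) + (q : ℚ) - 1) / 2 - (k : ℚ))

/-- `I = P' ∩ Q'`. -/
def Iseg (p q : ℕ) (lam : ℕ → ℤ) : Finset ℚ := Pseg p q lam ∩ Qseg p q lam

/-- A good parameter `(t_1,a_1),…,(t_r,a_r)` for `U(p,q)` (1-based indexing). -/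
structure GoodParam (p q r : ℕ) (t : ℕ → ℤ) (a : ℕ → ℕ) : Prop where
  hr : 1 ≤ r
  hpos : ∀ i ∈ Finset.Icc 1 r, 0 < a i
  hsum : ∑ i ∈ Finset.Icc 1 r, a i = p + q
  heven : ∀ i ∈ Finset.Icc 1 r, Even (t i + (a i : ℤ) + (p : ℤ) + (q : ℤ))
  hdec : ∀ i, 1 ≤ i → i < r → t (i + 1) ≤ t i
  hadec : ∀ i, 1 ≤ i → i < r → t i = t (i + 1) → a (i + 1) ≤ a i

/-- The segment `ν_i = {(t_i − a_i + 1)/2 + k : 0 ≤ k ≤ a_i − 1}` as a multiset of rationals. -/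
def nu (t : ℕ → ℤ) (a : ℕ → ℕ) (i : ℕ) : Multiset ℚ :=
  (Multiset.range (a i)).map (fun k => ((t i : ℚ) - (a i : ℚ) + 1) / 2 + (k : ℚ))

/-- `ν_{<j} = ν_1 ⊔ … ⊔ ν_{j−1}`. -/
def nuLt (t : ℕ → ℤ) (a : ℕ → ℕ) (j : ℕ) : Multiset ℚ :=
  ∑ k ∈ Finset.Icc 1 (j - 1), nu t a k

/-- `ν_{>j} = ν_{j+1} ⊔ … ⊔ ν_r`. -/
def nuGt (t : ℕ → ℤ) (a : ℕ → ℕ) (r j : ℕ) : Multiset ℚ :=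
  ∑ k ∈ Finset.Icc (j + 1) r, nu t a k

/-- `ν = ν_1 ⊔ … ⊔ ν_r`. -/
def nuAll (t : ℕ → ℤ) (a : ℕ → ℕ) (r : ℕ) : Multiset ℚ :=
  ∑ k ∈ Finset.Icc 1 r, nu t a k

/-- `j` is the least index with `a_1 + … + a_j ≥ p`. -/
structure LeastJ (p r : ℕ) (a : ℕ → ℕ) (j : ℕ) : Prop where
  h1 : 1 ≤ j
  hle : j ≤ r
  hge : p ≤ ∑ ℓ ∈ Finset.Icc 1 j, a ℓ
  hmin : ∀ i, i < j → ∑ ℓ ∈ Finset.Icc 1 i, a ℓ < p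

/-- `p_j = p − (a_1 + … + a_{j−1})`. -/
def pj (p : ℕ) (a : ℕ → ℕ) (j : ℕ) : ℕ := p - ∑ ℓ ∈ Finset.Icc 1 (j - 1), a ℓ

/-- `q_j = q − (a_{j+1} + … + a_r)`. -/
def qj (q r : ℕ) (a : ℕ → ℕ) (j : ℕ) : ℕ := q - ∑ ℓ ∈ Finset.Icc (j + 1) r, a ℓ

/-- The nonvanishing condition: `ν_{<j}` and `ν_{>j}` are multiplicity free,
`#(ν_j ∩ ν_{<j}) ≤ q_j` and `#(ν_j ∩ ν_{>j}) ≤ p_j`. -/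
def NonVanishing (p q r : ℕ) (t : ℕ → ℤ) (a : ℕ → ℕ) (j : ℕ) : Prop :=
  (nuLt t a j).Nodup ∧ (nuGt t a r j).Nodup ∧
  Multiset.card ((nu t a j).filter (fun x => x ∈ nuLt t a j)) ≤ qj q r a j ∧
  Multiset.card ((nu t a j).filter (fun x => x ∈ nuGt t a r j)) ≤ pj p a j

section Aux
open Finset

lemma myAux_sum_split {M : Type*} [AddCommMonoid M] (f : ℕ → M) {j r : ℕ} (h1 : 1 ≤ j)
    (h2 : j ≤ r) :
    ∑ i ∈ Icc 1 r, f i = (∑ i ∈ Icc 1 (j-1), f i) + f j + ∑ i ∈ Icc (j+1) r, f i := by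
  have e1 : Icc 1 r = Ioc 0 r := by rw [← Finset.Icc_add_one_left_eq_Ioc]; rfl
  have e2 : Icc 1 (j-1) = Ioc 0 (j-1) := by rw [← Finset.Icc_add_one_left_eq_Ioc]; rfl
  have e3 : Icc (j+1) r = Ioc j r := by rw [← Finset.Icc_add_one_left_eq_Ioc]
  have e4 : Ioc (j-1) j = {j} := by ext x; simp; omega
  rw [e1, e2, e3, ← Finset.sum_Ioc_consecutive f (Nat.zero_le j) h2,
    ← Finset.sum_Ioc_consecutive f (Nat.zero_le (j-1)) (Nat.sub_le j 1), e4,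
    Finset.sum_singleton]

lemma myAux_nu_eq (t : ℕ → ℤ) (a : ℕ → ℕ) (i : ℕ) :
    nu t a i = (Multiset.range (a i)).map
      (fun k : ℕ => ((t i : ℚ) - (a i : ℚ) + 1) / 2 + (k : ℚ)) := by
  unfold nu
  have heq : ((Multiset.range (a i) : Multiset ℕ) >>= fun k => pure ((k : ℚ)))
      = (Multiset.range (a i)).map (fun k : ℕ => (k:ℚ)) := by
    simp [Multiset.bind_singleton]
  rw [heq, Multiset.map_map]
  rfl

lemma myAux_nu_nodup (t : ℕ → ℤ) (a : ℕ → ℕ) (i : ℕ) : (nu t a i).Nodup := by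
  rw [myAux_nu_eq]
  refine Multiset.Nodup.map ?_ (Multiset.nodup_range _)
  intro k1 k2 h
  simp only at h
  have : (k1:ℚ) = k2 := by linarith
  exact_mod_cast this

lemma myAux_nu_card (t : ℕ → ℤ) (a : ℕ → ℕ) (i : ℕ) : Multiset.card (nu t a i) = a i := by
  rw [myAux_nu_eq]; simp

lemma myAux_card_sum (a : ℕ → ℕ) (f : ℕ → Multiset ℚ) (h : ∀ k, Multiset.card (f k) = a k)
    (s : Finset ℕ) : Multiset.card (∑ k ∈ s, f k) = ∑ k ∈ s, a k := by
  induction s using Finset.induction with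
  | empty => simp
  | insert x s' hx ih => simp [Finset.sum_insert hx, ih, h]

end Aux


/-- under nonvanishing and multiplicity at most two in `ν`:
(a) if `q_j = 0` then `ν_{≤j}` and `ν_{>j}` are multiplicity free of cardinalities `p`, `q`;
(b) if `q_j ≥ 1` and `p_j = #(ν_j ∩ ν_{>j})` then `ν_{<j} ⊔ (ν_j ∩ ν_{>j})` and
`ν_{≥j} ∖ (ν_j ∩ ν_{>j})` are multiplicity free of cardinalities `p`, `q`;
(c) if `q_j ≥ 1` and `q_j = #(ν_j ∩ ν_{<j})` then `ν_{≤j} ∖ (ν_{<j} ∩ ν_j)` and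
`(ν_{<j} ∩ ν_j) ⊔ ν_{>j}` are multiplicity free of cardinalities `p`, `q`. -/
theorem statement15 (p q r j : ℕ) (hp : 1 ≤ p) (hq : 1 ≤ q) (t : ℕ → ℤ) (a : ℕ → ℕ)
    (hgp : GoodParam p q r t a) (hj : LeastJ p r a j)
    (hnv : NonVanishing p q r t a j)
    (hmult : ∀ x : ℚ, Multiset.count x (nuAll t a r) ≤ 2) :
    (qj q r a j = 0 →
      ((nuLt t a j + nu t a j).Nodup ∧
       Multiset.card (nuLt t a j + nu t a j) = p ∧
       (nuGt t a r j).Nodup ∧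
       Multiset.card (nuGt t a r j) = q)) ∧
    (1 ≤ qj q r a j →
      pj p a j = Multiset.card ((nu t a j).filter (fun x => x ∈ nuGt t a r j)) →
      ((nuLt t a j + (nu t a j).filter (fun x => x ∈ nuGt t a r j)).Nodup ∧
       Multiset.card (nuLt t a j + (nu t a j).filter (fun x => x ∈ nuGt t a r j)) = p ∧
       ((nu t a j + nuGt t a r j) - (nu t a j).filter (fun x => x ∈ nuGt t a r j)).Nodup ∧
       Multiset.card
        ((nu t a j + nuGt t a r j) - (nu t a j).filter (fun x => x ∈ nuGt t a r j)) = q)) ∧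
    (1 ≤ qj q r a j →
      qj q r a j = Multiset.card ((nu t a j).filter (fun x => x ∈ nuLt t a j)) →
      (((nuLt t a j + nu t a j) - (nu t a j).filter (fun x => x ∈ nuLt t a j)).Nodup ∧
       Multiset.card
        ((nuLt t a j + nu t a j) - (nu t a j).filter (fun x => x ∈ nuLt t a j)) = p ∧
       ((nu t a j).filter (fun x => x ∈ nuLt t a j) + nuGt t a r j).Nodup ∧
       Multiset.card ((nu t a j).filter (fun x => x ∈ nuLt t a j) + nuGt t a r j) = q)) := by
  obtain ⟨hLnd, hGnd, hcle, hcge⟩ := hnv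
  set L := nuLt t a j with hLdef
  set V := nu t a j with hVdef
  set G := nuGt t a r j with hGdef
  have hVnd : V.Nodup := myAux_nu_nodup t a j
  set S := ∑ k ∈ Finset.Icc 1 (j-1), a k with hSdef
  set T := ∑ k ∈ Finset.Icc (j+1) r, a k with hTdef
  have hcardL : Multiset.card L = S := myAux_card_sum a _ (myAux_nu_card t a) _
  have hcardG : Multiset.card G = T := myAux_card_sum a _ (myAux_nu_card t a) _
  have hcardV : Multiset.card V = a j := myAux_nu_card t a j
  have hsum3 : S + a j + T = p + q := by
    have := hgp.hsum
    rwa [myAux_sum_split a hj.h1 hj.hle] at this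
  have hSlt : S < p := hj.hmin (j-1) (by have := hj.h1; omega)
  have hpA : p ≤ S + a j := by
    have := hj.hge
    rwa [myAux_sum_split a hj.h1 (le_refl j), Finset.Icc_eq_empty (by omega : ¬ (j+1 ≤ j)),
      Finset.sum_empty, add_zero] at this
  have hpj : pj p a j = p - S := rfl
  have hqj : qj q r a j = q - T := rfl
  have hTq : T ≤ q := by omega
  have hsplit : nuAll t a r = L + V + G := by
    rw [hLdef, hVdef, hGdef, nuAll, nuLt, nuGt, myAux_sum_split (nu t a) hj.h1 hj.hle]
  have htriple : ∀ x : ℚ, ¬ (x ∈ L ∧ x ∈ V ∧ x ∈ G) := by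
    rintro x ⟨hxL, hxV, hxG⟩
    have h1 : 1 ≤ Multiset.count x L := Multiset.one_le_count_iff_mem.mpr hxL
    have h2 : 1 ≤ Multiset.count x V := Multiset.one_le_count_iff_mem.mpr hxV
    have h3 : 1 ≤ Multiset.count x G := Multiset.one_le_count_iff_mem.mpr hxG
    have := hmult x
    rw [hsplit, Multiset.count_add, Multiset.count_add] at this
    omega
  have hcntL : ∀ x : ℚ, Multiset.count x L ≤ 1 := Multiset.nodup_iff_count_le_one.mp hLnd
  have hcntV : ∀ x : ℚ, Multiset.count x V ≤ 1 := Multiset.nodup_iff_count_le_one.mp hVnd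
  have hcntG : ∀ x : ℚ, Multiset.count x G ≤ 1 := Multiset.nodup_iff_count_le_one.mp hGnd
  refine ⟨?_, ?_, ?_⟩
  · -- part (a)
    intro hq0
    have hTeq : T = q := by omega
    have hfilt0 : (V.filter (fun x => x ∈ L)) = 0 := by
      rw [← Multiset.card_eq_zero]
      omega
    have hdisj : Disjoint L V := by
      rw [Multiset.disjoint_left]
      intro x hxL hxV
      have : x ∈ V.filter (fun x => x ∈ L) := Multiset.mem_filter.mpr ⟨hxV, hxL⟩
      rw [hfilt0] at this
      exact absurd this (Multiset.notMem_zero x)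
    refine ⟨Multiset.nodup_add.mpr ⟨hLnd, hVnd, hdisj⟩, ?_, hGnd, ?_⟩
    · rw [Multiset.card_add]; omega
    · omega
  · -- part (b)
    intro _ hpjeq
    set F := V.filter (fun x => x ∈ G) with hFdef
    have hFle : F ≤ V := Multiset.filter_le _ V
    have hFnd : F.Nodup := hVnd.filter _
    have hcntF : ∀ x : ℚ, Multiset.count x F = if x ∈ G then Multiset.count x V else 0 := by
      intro x; rw [hFdef, Multiset.count_filter]
    have hdisj : Disjoint L F := by
      rw [Multiset.disjoint_left]
      intro x hxL hxF
      obtain ⟨hxV, hxG⟩ := Multiset.mem_filter.mp hxF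
      exact htriple x ⟨hxL, hxV, hxG⟩
    refine ⟨Multiset.nodup_add.mpr ⟨hLnd, hFnd, hdisj⟩, ?_, ?_, ?_⟩
    · rw [Multiset.card_add]; omega
    · rw [Multiset.nodup_iff_count_le_one]
      intro x
      rw [Multiset.count_sub, Multiset.count_add, hcntF x]
      have := hcntV x; have := hcntG x
      by_cases hxG : x ∈ G
      · have : 1 ≤ Multiset.count x G := Multiset.one_le_count_iff_mem.mpr hxG
        simp only [hxG, if_true]
        omega
      · have : Multiset.count x G = 0 := Multiset.count_eq_zero.mpr hxG
        simp only [hxG, if_false]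
        omega
    · rw [Multiset.card_sub (hFle.trans (Multiset.le_add_right V G)), Multiset.card_add]
      omega
  · -- part (c)
    intro _ hqjeq
    set F := V.filter (fun x => x ∈ L) with hFdef
    have hFle : F ≤ V := Multiset.filter_le _ V
    have hFnd : F.Nodup := hVnd.filter _
    have hcntF : ∀ x : ℚ, Multiset.count x F = if x ∈ L then Multiset.count x V else 0 := by
      intro x; rw [hFdef, Multiset.count_filter]
    have hdisj : Disjoint F G := by
      rw [Multiset.disjoint_left]
      intro x hxF hxG
      obtain ⟨hxV, hxL⟩ := Multiset.mem_filter.mp hxF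
      exact htriple x ⟨hxL, hxV, hxG⟩
    refine ⟨?_, ?_, Multiset.nodup_add.mpr ⟨hFnd, hGnd, hdisj⟩, ?_⟩
    · rw [Multiset.nodup_iff_count_le_one]
      intro x
      rw [Multiset.count_sub, Multiset.count_add, hcntF x]
      have := hcntV x; have := hcntL x
      by_cases hxL : x ∈ L
      · have : 1 ≤ Multiset.count x L := Multiset.one_le_count_iff_mem.mpr hxL
        simp only [hxL, if_true]
        omega
      · have : Multiset.count x L = 0 := Multiset.count_eq_zero.mpr hxL
        simp only [hxL, if_false]
        omega
    · rw [Multiset.card_sub (hFle.trans (Multiset.le_add_left V L)), Multiset.card_add]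
      omega
    · rw [Multiset.card_add]; omega
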